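/- Let U ⊆ ℝ² be open, F : U → ℝ three times continuously differentiable, m ∈ ℝ, and let γ : I → U be a differentiable curve on an interval I with γ(t) ≠ (0,0) and γ'(t) = (F_y(γ(t)), −F_x(γ(t))) for all t ∈ I. Suppose that at every point (x,y) = γ(t): (x² + y²)·(F_xxx·F_y³ − 3·F_xxy·F_x·F_y² + 3·F_xyy·F_x²·F_y − F_yyy·F_x³) + 6·(1−m)·H(F)·(x·F_y − y·F_x) = 0, where H(F) := F_xx·F_y² − 2·F_xy·F_x·F_y + F_yy·F_x² and all derivatives are evaluated at (x,y). Then the function t ↦ H(F)(γ(t))·(γ₁(t)² + γ₂(t)²)^{3−3m} (real power) is constant on I. -/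

import Mathlib

/-- Partial derivative of `F : ℝ × ℝ → ℝ` in the first variable. -/
noncomputable def pdx (F : ℝ × ℝ → ℝ) : ℝ × ℝ → ℝ :=
  fun p => deriv (fun s => F (s, p.2)) p.1

/-- Partial derivative of `F : ℝ × ℝ → ℝ` in the second variable. -/
noncomputable def pdy (F : ℝ × ℝ → ℝ) : ℝ × ℝ → ℝ :=
  fun p => deriv (fun s => F (p.1, s)) p.2

/-- The affine Hessian-type expression `H(F) = F_xx F_y² − 2F_xy F_x F_y + F_yy F_x²`. -/
noncomputable def HH (F : ℝ × ℝ → ℝ) : ℝ × ℝ → ℝ :=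
  fun p => pdx (pdx F) p * (pdy F p) ^ 2 - 2 * pdy (pdx F) p * pdx F p * pdy F p +
    pdy (pdy F) p * (pdx F p) ^ 2

open Set Filter

section Helpers

lemma hasDerivAt_sliceX {g : ℝ × ℝ → ℝ} {p : ℝ × ℝ} (h : DifferentiableAt ℝ g p) :
    HasDerivAt (fun s => g (s, p.2)) (fderiv ℝ g p (1, 0)) p.1 := by
  have h1 : HasDerivAt (fun s : ℝ => (s, p.2)) ((1 : ℝ), (0 : ℝ)) p.1 :=
    (hasDerivAt_id p.1).prodMk (hasDerivAt_const _ _)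
  exact h.hasFDerivAt.comp_hasDerivAt p.1 h1

lemma hasDerivAt_sliceY {g : ℝ × ℝ → ℝ} {p : ℝ × ℝ} (h : DifferentiableAt ℝ g p) :
    HasDerivAt (fun s => g (p.1, s)) (fderiv ℝ g p (0, 1)) p.2 := by
  have h1 : HasDerivAt (fun s : ℝ => (p.1, s)) ((0 : ℝ), (1 : ℝ)) p.2 :=
    (hasDerivAt_const _ _).prodMk (hasDerivAt_id p.2)
  exact h.hasFDerivAt.comp_hasDerivAt p.2 h1

lemma pdx_eq {g : ℝ × ℝ → ℝ} {p : ℝ × ℝ} (h : DifferentiableAt ℝ g p) :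
    pdx g p = fderiv ℝ g p (1, 0) := (hasDerivAt_sliceX h).deriv

lemma pdy_eq {g : ℝ × ℝ → ℝ} {p : ℝ × ℝ} (h : DifferentiableAt ℝ g p) :
    pdy g p = fderiv ℝ g p (0, 1) := (hasDerivAt_sliceY h).deriv

lemma chainRule {g : ℝ × ℝ → ℝ} {γ : ℝ → ℝ × ℝ} {v : ℝ × ℝ} {t : ℝ}
    (hg : DifferentiableAt ℝ g (γ t)) (hγ : HasDerivAt γ v t) :
    HasDerivAt (fun t => g (γ t)) (v.1 * pdx g (γ t) + v.2 * pdy g (γ t)) t := by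
  have h : HasDerivAt (fun t => g (γ t)) (fderiv ℝ g (γ t) v) t := hg.hasFDerivAt.comp_hasDerivAt t hγ
  have hv : v = v.1 • ((1 : ℝ), (0 : ℝ)) + v.2 • ((0 : ℝ), (1 : ℝ)) := by
    ext <;> simp
  convert h using 1
  rw [pdx_eq hg, pdy_eq hg]
  conv_rhs => rw [hv]
  rw [map_add, map_smul, map_smul]
  simp [smul_eq_mul]

lemma pdx_contDiffOn {U : Set (ℝ × ℝ)} (hU : IsOpen U) {g : ℝ × ℝ → ℝ} {n : ℕ∞}
    (hg : ContDiffOn ℝ (n + 1) g U) : ContDiffOn ℝ n (pdx g) U := by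
  have hd : ∀ q ∈ U, DifferentiableAt ℝ g q := fun q hq =>
    (hg.differentiableOn (by simp)).differentiableAt (hU.mem_nhds hq)
  have h1 : ContDiffOn ℝ n (fun q => fderiv ℝ g q (1, 0)) U :=
    (hg.fderiv_of_isOpen hU le_rfl).clm_apply contDiffOn_const
  exact h1.congr fun q hq => pdx_eq (hd q hq)

lemma pdy_contDiffOn {U : Set (ℝ × ℝ)} (hU : IsOpen U) {g : ℝ × ℝ → ℝ} {n : ℕ∞}
    (hg : ContDiffOn ℝ (n + 1) g U) : ContDiffOn ℝ n (pdy g) U := by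
  have hd : ∀ q ∈ U, DifferentiableAt ℝ g q := fun q hq =>
    (hg.differentiableOn (by simp)).differentiableAt (hU.mem_nhds hq)
  have h1 : ContDiffOn ℝ n (fun q => fderiv ℝ g q (0, 1)) U :=
    (hg.fderiv_of_isOpen hU le_rfl).clm_apply contDiffOn_const
  exact h1.congr fun q hq => pdy_eq (hd q hq)

lemma pdx_congr {f h : ℝ × ℝ → ℝ} {p : ℝ × ℝ} (he : f =ᶠ[nhds p] h) : pdx f p = pdx h p := by
  apply Filter.EventuallyEq.deriv_eq
  have hc : Filter.Tendsto (fun s : ℝ => (s, p.2)) (nhds p.1) (nhds p) := by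
    have : ContinuousAt (fun s : ℝ => (s, p.2)) p.1 := by fun_prop
    exact this
  exact he.comp_tendsto hc

lemma pdy_congr {f h : ℝ × ℝ → ℝ} {p : ℝ × ℝ} (he : f =ᶠ[nhds p] h) : pdy f p = pdy h p := by
  apply Filter.EventuallyEq.deriv_eq
  have hc : Filter.Tendsto (fun s : ℝ => (p.1, s)) (nhds p.2) (nhds p) := by
    have : ContinuousAt (fun s : ℝ => (p.1, s)) p.2 := by fun_prop
    exact this
  exact he.comp_tendsto hc

lemma fderiv_clm_apply_eq {g : ℝ × ℝ → ℝ} {p : ℝ × ℝ}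
    (h : DifferentiableAt ℝ (fderiv ℝ g) p) (w u : ℝ × ℝ) :
    fderiv ℝ (fun q => fderiv ℝ g q w) p u = fderiv ℝ (fderiv ℝ g) p u w := by
  have h3 : HasFDerivAt (fun q => fderiv ℝ g q w)
      ((ContinuousLinearMap.apply ℝ ℝ w).comp (fderiv ℝ (fderiv ℝ g) p)) p :=
    (ContinuousLinearMap.apply ℝ ℝ w).hasFDerivAt.comp p h.hasFDerivAt
  rw [h3.fderiv]
  rfl

lemma diffAt_clm_apply {g : ℝ × ℝ → ℝ} {p : ℝ × ℝ}
    (h : DifferentiableAt ℝ (fderiv ℝ g) p) (w : ℝ × ℝ) :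
    DifferentiableAt ℝ (fun q => fderiv ℝ g q w) p :=
  ((ContinuousLinearMap.apply ℝ ℝ w).hasFDerivAt.comp p h.hasFDerivAt).differentiableAt

lemma pd_symm {U : Set (ℝ × ℝ)} (hU : IsOpen U) {g : ℝ × ℝ → ℝ}
    (hg : ContDiffOn ℝ 2 g U) {p : ℝ × ℝ} (hp : p ∈ U) :
    pdx (pdy g) p = pdy (pdx g) p := by
  have hfd : DifferentiableAt ℝ (fderiv ℝ g) p :=
    ((hg.fderiv_of_isOpen hU (m := 1) (by norm_num)).differentiableOn one_ne_zero).differentiableAt (hU.mem_nhds hp)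
  have hsymm := (hg.contDiffAt (hU.mem_nhds hp)).isSymmSndFDerivAt (by simp)
  have hd : ∀ q ∈ U, DifferentiableAt ℝ g q := fun q hq =>
    (hg.differentiableOn two_ne_zero).differentiableAt (hU.mem_nhds hq)
  have hey : pdy g =ᶠ[nhds p] fun q => fderiv ℝ g q (0, 1) := by
    filter_upwards [hU.mem_nhds hp] with q hq using pdy_eq (hd q hq)
  have hex : pdx g =ᶠ[nhds p] fun q => fderiv ℝ g q (1, 0) := by
    filter_upwards [hU.mem_nhds hp] with q hq using pdx_eq (hd q hq)
  calc pdx (pdy g) p = pdx (fun q => fderiv ℝ g q (0, 1)) p := pdx_congr hey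
    _ = fderiv ℝ (fun q => fderiv ℝ g q (0, 1)) p (1, 0) := pdx_eq (diffAt_clm_apply hfd _)
    _ = fderiv ℝ (fderiv ℝ g) p (1, 0) (0, 1) := fderiv_clm_apply_eq hfd _ _
    _ = fderiv ℝ (fderiv ℝ g) p (0, 1) (1, 0) := hsymm _ _
    _ = fderiv ℝ (fun q => fderiv ℝ g q (1, 0)) p (0, 1) := (fderiv_clm_apply_eq hfd _ _).symm
    _ = pdy (fun q => fderiv ℝ g q (1, 0)) p := (pdy_eq (diffAt_clm_apply hfd _)).symm
    _ = pdy (pdx g) p := (pdy_congr hex).symm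

end Helpers

/-- integration step in the proof of Theorem 6 of the paper: if the
third-order relation (equation (15)) holds along an integral curve `γ` of the
tangent field `v = (F_y, −F_x)`, then `H(F)·(x²+y²)^{3−3m}` is constant along `γ`. -/
theorem stmt15 (U : Set (ℝ × ℝ)) (hU : IsOpen U)
    (F : ℝ × ℝ → ℝ) (hF : ContDiffOn ℝ 3 F U) (m : ℝ)
    (I : Set ℝ) (hI : I.OrdConnected) (γ : ℝ → ℝ × ℝ)
    (hγU : ∀ t ∈ I, γ t ∈ U) (hγ0 : ∀ t ∈ I, γ t ≠ (0, 0))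
    (hγ' : ∀ t ∈ I, HasDerivAt γ (pdy F (γ t), -pdx F (γ t)) t)
    (heq : ∀ t ∈ I,
      ((γ t).1 ^ 2 + (γ t).2 ^ 2) *
          (pdx (pdx (pdx F)) (γ t) * (pdy F (γ t)) ^ 3 -
            3 * pdy (pdx (pdx F)) (γ t) * pdx F (γ t) * (pdy F (γ t)) ^ 2 +
            3 * pdy (pdy (pdx F)) (γ t) * (pdx F (γ t)) ^ 2 * pdy F (γ t) -
            pdy (pdy (pdy F)) (γ t) * (pdx F (γ t)) ^ 3) +
        6 * (1 - m) * HH F (γ t) *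
          ((γ t).1 * pdy F (γ t) - (γ t).2 * pdx F (γ t)) = 0) :
    ∀ s ∈ I, ∀ t ∈ I,
      HH F (γ s) * ((γ s).1 ^ 2 + (γ s).2 ^ 2) ^ (3 - 3 * m) =
        HH F (γ t) * ((γ t).1 ^ 2 + (γ t).2 ^ 2) ^ (3 - 3 * m) := by
  -- regularity bookkeeping
  have hF3 : ContDiffOn ℝ ((2 : ℕ∞) + 1) F U := by exact_mod_cast hF
  have hF2 : ContDiffOn ℝ 2 F U := hF.of_le (by norm_num)
  have hFx2 : ContDiffOn ℝ 2 (pdx F) U := pdx_contDiffOn hU hF3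
  have hFy2 : ContDiffOn ℝ 2 (pdy F) U := pdy_contDiffOn hU hF3
  have hFx2' : ContDiffOn ℝ ((1 : ℕ∞) + 1) (pdx F) U := by exact_mod_cast hFx2
  have hFy2' : ContDiffOn ℝ ((1 : ℕ∞) + 1) (pdy F) U := by exact_mod_cast hFy2
  have hFxx1 : ContDiffOn ℝ 1 (pdx (pdx F)) U := pdx_contDiffOn hU hFx2'
  have hFxy1 : ContDiffOn ℝ 1 (pdy (pdx F)) U := pdy_contDiffOn hU hFx2'
  have hFyy1 : ContDiffOn ℝ 1 (pdy (pdy F)) U := pdy_contDiffOn hU hFy2'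
  set φ : ℝ → ℝ := fun t => HH F (γ t) * ((γ t).1 ^ 2 + (γ t).2 ^ 2) ^ (3 - 3 * m) with hφdef
  have key : ∀ t ∈ I, HasDerivAt φ 0 t := by
    intro t ht
    have hp : γ t ∈ U := hγU t ht
    have hnp := hU.mem_nhds hp
    have dFx : DifferentiableAt ℝ (pdx F) (γ t) :=
      (hFx2.differentiableOn two_ne_zero).differentiableAt hnp
    have dFy : DifferentiableAt ℝ (pdy F) (γ t) :=
      (hFy2.differentiableOn two_ne_zero).differentiableAt hnp
    have dFxx : DifferentiableAt ℝ (pdx (pdx F)) (γ t) :=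
      (hFxx1.differentiableOn one_ne_zero).differentiableAt hnp
    have dFxy : DifferentiableAt ℝ (pdy (pdx F)) (γ t) :=
      (hFxy1.differentiableOn one_ne_zero).differentiableAt hnp
    have dFyy : DifferentiableAt ℝ (pdy (pdy F)) (γ t) :=
      (hFyy1.differentiableOn one_ne_zero).differentiableAt hnp
    have hv := hγ' t ht
    -- symmetry of mixed partials
    have hsy1 : pdx (pdy F) (γ t) = pdy (pdx F) (γ t) := pd_symm hU hF2 hp
    have hsy2 : pdx (pdy (pdx F)) (γ t) = pdy (pdx (pdx F)) (γ t) := pd_symm hU hFx2 hp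
    have hsy3 : pdx (pdy (pdy F)) (γ t) = pdy (pdy (pdx F)) (γ t) := by
      have h1 : pdx (pdy (pdy F)) (γ t) = pdy (pdx (pdy F)) (γ t) := pd_symm hU hFy2 hp
      have hee : pdx (pdy F) =ᶠ[nhds (γ t)] pdy (pdx F) := by
        filter_upwards [hnp] with q hq using pd_symm hU hF2 hq
      rw [h1, pdy_congr hee]
    -- derivatives along the curve
    have ha : HasDerivAt (fun t => pdx F (γ t))
        (pdy F (γ t) * pdx (pdx F) (γ t) + -pdx F (γ t) * pdy (pdx F) (γ t)) t :=
      chainRule dFx hv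
    have hb : HasDerivAt (fun t => pdy F (γ t))
        (pdy F (γ t) * pdy (pdx F) (γ t) + -pdx F (γ t) * pdy (pdy F) (γ t)) t := by
      have h := chainRule dFy hv
      rwa [show (pdy F (γ t), -pdx F (γ t)).1 * pdx (pdy F) (γ t) = pdy F (γ t) * pdx (pdy F) (γ t)
        from rfl, hsy1] at h
    have hc : HasDerivAt (fun t => pdx (pdx F) (γ t))
        (pdy F (γ t) * pdx (pdx (pdx F)) (γ t) + -pdx F (γ t) * pdy (pdx (pdx F)) (γ t)) t :=
      chainRule dFxx hv
    have hd : HasDerivAt (fun t => pdy (pdx F) (γ t))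
        (pdy F (γ t) * pdy (pdx (pdx F)) (γ t) + -pdx F (γ t) * pdy (pdy (pdx F)) (γ t)) t := by
      have h := chainRule dFxy hv
      rwa [show (pdy F (γ t), -pdx F (γ t)).1 * pdx (pdy (pdx F)) (γ t)
        = pdy F (γ t) * pdx (pdy (pdx F)) (γ t) from rfl, hsy2] at h
    have he : HasDerivAt (fun t => pdy (pdy F) (γ t))
        (pdy F (γ t) * pdy (pdy (pdx F)) (γ t) + -pdx F (γ t) * pdy (pdy (pdy F)) (γ t)) t := by
      have h := chainRule dFyy hv
      rwa [show (pdy F (γ t), -pdx F (γ t)).1 * pdx (pdy (pdy F)) (γ t)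
        = pdy F (γ t) * pdx (pdy (pdy F)) (γ t) from rfl, hsy3] at h
    -- derivative of HH ∘ γ
    have hHH : HasDerivAt (fun t => HH F (γ t))
        (pdx (pdx (pdx F)) (γ t) * (pdy F (γ t)) ^ 3 -
          3 * pdy (pdx (pdx F)) (γ t) * pdx F (γ t) * (pdy F (γ t)) ^ 2 +
          3 * pdy (pdy (pdx F)) (γ t) * (pdx F (γ t)) ^ 2 * pdy F (γ t) -
          pdy (pdy (pdy F)) (γ t) * (pdx F (γ t)) ^ 3) t := by
      have h := ((hc.mul (hb.pow 2)).sub (((hd.const_mul 2).mul ha).mul hb)).add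
        (he.mul (ha.pow 2))
      have heqf : (fun t => HH F (γ t)) = fun t =>
          pdx (pdx F) (γ t) * (pdy F (γ t)) ^ 2 -
            2 * pdy (pdx F) (γ t) * pdx F (γ t) * pdy F (γ t) +
            pdy (pdy F) (γ t) * (pdx F (γ t)) ^ 2 := rfl
      rw [heqf]
      exact h.congr_deriv (by simp only [Pi.mul_apply, Pi.pow_apply]; ring)
    -- derivative of the radius
    have hx1 : HasDerivAt (fun t => (γ t).1) (pdy F (γ t)) t := by
      have := (ContinuousLinearMap.fst ℝ ℝ ℝ).hasFDerivAt.comp_hasDerivAt t hv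
      exact this
    have hx2 : HasDerivAt (fun t => (γ t).2) (-pdx F (γ t)) t := by
      have := (ContinuousLinearMap.snd ℝ ℝ ℝ).hasFDerivAt.comp_hasDerivAt t hv
      exact this
    have hr : HasDerivAt (fun t => (γ t).1 ^ 2 + (γ t).2 ^ 2)
        (2 * (γ t).1 ^ 1 * pdy F (γ t) + 2 * (γ t).2 ^ 1 * -pdx F (γ t)) t :=
      (hx1.pow 2).add (hx2.pow 2)
    have hrpos : 0 < (γ t).1 ^ 2 + (γ t).2 ^ 2 := by
      have h0 : γ t ≠ (0, 0) := hγ0 t ht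
      by_contra hle
      push_neg at hle
      have h1 : (γ t).1 = 0 ∧ (γ t).2 = 0 := by
        constructor <;> nlinarith [sq_nonneg (γ t).1, sq_nonneg (γ t).2]
      exact h0 (Prod.ext h1.1 h1.2)
    have hrp := hr.rpow_const (p := 3 - 3 * m) (Or.inl (ne_of_gt hrpos))
    have hprod := hHH.mul hrp
    have hsplit : ((γ t).1 ^ 2 + (γ t).2 ^ 2) ^ (3 - 3 * m)
        = ((γ t).1 ^ 2 + (γ t).2 ^ 2) * ((γ t).1 ^ 2 + (γ t).2 ^ 2) ^ (3 - 3 * m - 1) := by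
      have h1 := Real.rpow_add hrpos 1 (3 - 3 * m - 1)
      rw [Real.rpow_one] at h1
      rw [show (1 : ℝ) + (3 - 3 * m - 1) = 3 - 3 * m from by ring] at h1
      exact h1
    rw [hφdef]
    refine hprod.congr_deriv ?_
    rw [hsplit]
    linear_combination (((γ t).1 ^ 2 + (γ t).2 ^ 2) ^ (3 - 3 * m - 1)) * heq t ht
  -- constancy from zero derivative
  intro s hs t ht
  rcases le_total s t with h | h
  · have hsub : Icc s t ⊆ I := hI.out hs ht
    have hc := constant_of_has_deriv_right_zero (f := φ) (a := s) (b := t)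
      (fun x hx => (key x (hsub hx)).continuousAt.continuousWithinAt)
      (fun x hx => (key x (hsub (Ico_subset_Icc_self hx))).hasDerivWithinAt)
    exact (hc t (right_mem_Icc.2 h)).symm
  · have hsub : Icc t s ⊆ I := hI.out ht hs
    have hc := constant_of_has_deriv_right_zero (f := φ) (a := t) (b := s)
      (fun x hx => (key x (hsub hx)).continuousAt.continuousWithinAt)
      (fun x hx => (key x (hsub (Ico_subset_Icc_self hx))).hasDerivWithinAt)
    exact hc s (right_mem_Icc.2 h)
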